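/- Let H be a real Hilbert space, let C and Ω be nonempty, closed and convex subsets of H, and let f : H → H be monotone on C and Lipschitz continuous on H with constant κ > 0. Assume Ω ∩ SOL(C,f) ≠ ∅. Let {λ_k} ⊆ [a,b] for some 0 < a ≤ b < 1/κ and {α_k} ⊆ [c,d] for some 0 < c ≤ d < 1. Let x⁰ ∈ H be arbitrary and define, for each k ≥ 0, y^k = P_C(x^k − λ_k f(x^k)), the half-space T_k = {w ∈ H : ⟨(x^k − λ_k f(x^k)) − y^k, w − y^k⟩ ≤ 0}, and x^{k+1} = α_k x^k + (1 − α_k) P_Ω(P_{T_k}(x^k − λ_k f(y^k))). Then the sequences {x^k} and {y^k} converge weakly to one and the same point z ∈ Ω ∩ SOL(C,f), and moreover z = lim_{k→∞} P_{Ω ∩ SOL(C,f)}(x^k) (strong limit of the projections). -/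

import Mathlib

open RealInnerProductSpace

section AuxLemmas

open Filter Metric

variable {H : Type*} [NormedAddCommGroup H] [InnerProductSpace ℝ H]

private lemma aux_comb (θ : ℝ) (v w : H) :
    ‖θ • v + (1 - θ) • w‖^2 = θ*‖v‖^2 + (1-θ)*‖w‖^2 - θ*(1-θ)*‖v - w‖^2 := by
  have hvw : ‖v - w‖^2 = ⟪v,v⟫ - 2*⟪v,w⟫ + ⟪w,w⟫ := by
    rw [norm_sub_sq_real, real_inner_self_eq_norm_sq, real_inner_self_eq_norm_sq]
  have h1 : ‖θ • v + (1 - θ) • w‖^2 = ⟪θ • v + (1 - θ) • w, θ • v + (1 - θ) • w⟫ :=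
    (real_inner_self_eq_norm_sq _).symm
  rw [h1, hvw, ← real_inner_self_eq_norm_sq, ← real_inner_self_eq_norm_sq]
  simp only [inner_add_add_self, real_inner_smul_left, real_inner_smul_right]
  rw [real_inner_comm w v]
  ring

private lemma aux_proj_char {S : Set H} (hco : Convex ℝ S) {xx p : H}
    (hpS : p ∈ S) (hmin : ∀ q ∈ S, ‖xx - p‖ ≤ ‖xx - q‖) {u : H} (hu : u ∈ S) :
    ⟪xx - p, u - p⟫ ≤ 0 := by
  have key : ∀ θ : ℝ, 0 < θ → θ ≤ 1 → ⟪xx - p, u - p⟫ ≤ θ/2 * ‖u - p‖^2 := by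
    intro θ hθ0 hθ1
    have hq : (1-θ) • p + θ • u ∈ S := hco hpS hu (by linarith) (le_of_lt hθ0) (by ring)
    have hle := hmin _ hq
    have hsq : ‖xx - p‖^2 ≤ ‖xx - ((1-θ) • p + θ • u)‖^2 :=
      pow_le_pow_left₀ (norm_nonneg _) hle 2
    have hrw : xx - ((1-θ) • p + θ • u) = (xx - p) - θ • (u - p) := by
      rw [smul_sub, sub_smul]; abel_nf; module
    have hexp : ‖(xx - p) - θ • (u - p)‖^2
        = ‖xx - p‖^2 - 2*(θ*⟪xx - p, u - p⟫) + θ^2*‖u - p‖^2 := by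
      rw [norm_sub_sq_real, real_inner_smul_right, norm_smul, mul_pow,
        Real.norm_eq_abs, sq_abs]
    rw [hrw, hexp] at hsq
    nlinarith [norm_nonneg (u - p), sq_nonneg θ]
  have htend : Tendsto (fun n : ℕ => ((1:ℝ)/(n+1))/2 * ‖u - p‖^2) atTop (nhds 0) := by
    have := (tendsto_one_div_add_atTop_nhds_zero_nat.div_const 2).mul_const (‖u - p‖^2)
    simpa using this
  refine ge_of_tendsto' htend (fun n => key _ ?_ ?_)
  · positivity
  · rw [div_le_one (by positivity)]; linarith [Nat.cast_nonneg (α := ℝ) n]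

private lemma aux_proj_contract {xx p u : H} (h : ⟪xx - p, u - p⟫ ≤ 0) :
    ‖p - u‖^2 ≤ ‖xx - u‖^2 - ‖xx - p‖^2 := by
  have hid : ‖xx - u‖^2 = ‖xx - p‖^2 + 2*⟪xx - p, p - u⟫ + ‖p - u‖^2 := by
    have h0 : xx - u = (xx - p) + (p - u) := by abel
    rw [h0, norm_add_sq_real]
  have h2 : ⟪xx - p, p - u⟫ = - ⟪xx - p, u - p⟫ := by
    rw [← inner_neg_right]; congr 1; abel
  nlinarith

private lemma aux_par (A B : H) :
    ‖A + B‖^2 + ‖A - B‖^2 = 2*‖A‖^2 + 2*‖B‖^2 := by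
  rw [norm_add_sq_real, norm_sub_sq_real]; ring

private lemma aux_weak_ultra [CompleteSpace H] (x : ℕ → H) (R : ℝ) (hR : ∀ k, ‖x k‖ ≤ R)
    (U : Ultrafilter ℕ) :
    ∃ z : H, ∀ w : H, Tendsto (fun k => ⟪x k, w⟫) (U : Filter ℕ) (nhds ⟪z, w⟫) := by
  set φ : ℕ → WeakDual ℝ H :=
    fun k => StrongDual.toWeakDual (InnerProductSpace.toDual ℝ H (x k)) with hφ
  have hmem : ∀ k, φ k ∈
      (⇑WeakDual.toStrongDual ⁻¹' Metric.closedBall (0 : StrongDual ℝ H) R) := by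
    intro k
    simp only [Set.mem_preimage, Metric.mem_closedBall, dist_zero_right]
    show ‖(InnerProductSpace.toDual ℝ H (x k) : StrongDual ℝ H)‖ ≤ R
    rw [LinearIsometryEquiv.norm_map]; exact hR k
  have hle : (U.map φ : Filter (WeakDual ℝ H)) ≤ Filter.principal
      (⇑WeakDual.toStrongDual ⁻¹' Metric.closedBall (0 : StrongDual ℝ H) R) := by
    rw [Filter.le_principal_iff]
    exact Filter.mem_map.2 (Filter.Eventually.of_forall hmem)
  obtain ⟨ψ, -, hψ⟩ :=
    (WeakDual.isCompact_closedBall (𝕜 := ℝ) (0 : StrongDual ℝ H) R).ultrafilter_le_nhds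
      (U.map φ) hle
  have htend : Tendsto φ (U : Filter ℕ) (nhds ψ) := hψ
  set zz := (InnerProductSpace.toDual ℝ H).symm (WeakDual.toStrongDual ψ) with hzz
  refine ⟨zz, fun w => ?_⟩
  have h1 : Tendsto (fun k => (φ k) w) (U : Filter ℕ) (nhds (ψ w)) :=
    ((WeakDual.eval_continuous w).tendsto ψ).comp htend
  have h2 : ∀ k, (φ k) w = ⟪x k, w⟫ := fun k => InnerProductSpace.toDual_apply_apply
  have h3 : ψ w = ⟪zz, w⟫ := by
    have h4 : (InnerProductSpace.toDual ℝ H) zz = WeakDual.toStrongDual ψ :=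
      LinearIsometryEquiv.apply_symm_apply _ _
    have h5 : ψ w = (WeakDual.toStrongDual ψ) w := rfl
    rw [h5, ← h4, InnerProductSpace.toDual_apply_apply]
  simp only [h2] at h1
  rwa [h3] at h1

private lemma aux_key {X Y tk u fX fY : H} {lamk κ bb : ℝ} (hl0 : 0 < lamk) (hlb : lamk ≤ bb)
    (hκ : 0 < κ)
    (h1 : ⟪(X - lamk • fY) - tk, u - tk⟫ ≤ 0)
    (h2 : 0 ≤ ⟪Y - u, fY⟫)
    (h3 : ⟪X - lamk • fX - Y, tk - Y⟫ ≤ 0)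
    (h4 : ‖fX - fY‖ ≤ κ * ‖X - Y‖) :
    ‖tk - u‖^2 ≤ ‖X - u‖^2 - (1-(bb*κ)^2) * ‖X - Y‖^2 := by
  set s : H := X - lamk • fY with hs
  have stepA : ‖tk - u‖^2 ≤ ‖s - u‖^2 - ‖s - tk‖^2 := aux_proj_contract h1
  have e1 : ‖s - u‖^2 = ‖X - u‖^2 - 2*(lamk*⟪X - u, fY⟫) + lamk^2*‖fY‖^2 := by
    have h0 : s - u = (X - u) - lamk • fY := by rw [hs]; abel
    rw [h0, norm_sub_sq_real, real_inner_smul_right, norm_smul, mul_pow,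
      Real.norm_eq_abs, sq_abs]
  have e2 : ‖s - tk‖^2 = ‖X - tk‖^2 - 2*(lamk*⟪X - tk, fY⟫) + lamk^2*‖fY‖^2 := by
    have h0 : s - tk = (X - tk) - lamk • fY := by rw [hs]; abel
    rw [h0, norm_sub_sq_real, real_inner_smul_right, norm_smul, mul_pow,
      Real.norm_eq_abs, sq_abs]
  have e3 : lamk*⟪X - u, fY⟫ - lamk*⟪X - tk, fY⟫ = lamk*⟪tk - u, fY⟫ := by
    have h0 : ⟪X - u, fY⟫ - ⟪X - tk, fY⟫ = ⟪tk - u, fY⟫ := by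
      rw [← inner_sub_left, show (X - u) - (X - tk) = tk - u by abel]
    linear_combination lamk * h0
  have e4 : lamk*⟪tk - u, fY⟫ = lamk*⟪tk - Y, fY⟫ + lamk*⟪Y - u, fY⟫ := by
    have h0 : ⟪tk - u, fY⟫ = ⟪tk - Y, fY⟫ + ⟪Y - u, fY⟫ := by
      rw [← inner_add_left, show (tk - Y) + (Y - u) = tk - u by abel]
    linear_combination lamk * h0
  have e5 : ‖X - tk‖^2 = ‖X - Y‖^2 - 2*⟪X - Y, tk - Y⟫ + ‖tk - Y‖^2 := by
    have h0 : X - tk = (X - Y) - (tk - Y) := by abel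
    rw [h0, norm_sub_sq_real]
  have e6 : ⟪X - Y, tk - Y⟫ - lamk*⟪tk - Y, fY⟫
      = ⟪X - lamk • fX - Y, tk - Y⟫ + lamk * ⟪fX - fY, tk - Y⟫ := by
    simp only [inner_sub_left, inner_sub_right, real_inner_smul_left, real_inner_smul_right]
    simp only [real_inner_comm fY tk, real_inner_comm fY Y, real_inner_comm fX tk,
      real_inner_comm fX Y]
    ring
  have h2' : 0 ≤ lamk * ⟪Y - u, fY⟫ := mul_nonneg hl0.le h2
  have h8 : ⟪fX - fY, tk - Y⟫ ≤ κ*‖X-Y‖*‖tk-Y‖ := by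
    calc ⟪fX - fY, tk - Y⟫ ≤ ‖fX - fY‖ * ‖tk - Y‖ := real_inner_le_norm _ _
    _ ≤ κ*‖X-Y‖*‖tk-Y‖ := mul_le_mul_of_nonneg_right h4 (norm_nonneg _)
  have h8' : lamk * ⟪fX - fY, tk - Y⟫ ≤ lamk * (κ*‖X-Y‖*‖tk-Y‖) :=
    mul_le_mul_of_nonneg_left h8 hl0.le
  have h9 : 2*(lamk * (κ*‖X-Y‖*‖tk-Y‖)) ≤ (lamk*κ)^2*‖X-Y‖^2 + ‖tk-Y‖^2 := by
    nlinarith [sq_nonneg (lamk*κ*‖X-Y‖ - ‖tk-Y‖)]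
  have h10 : (lamk*κ)^2*‖X-Y‖^2 ≤ (bb*κ)^2*‖X-Y‖^2 := by
    have : (lamk*κ)^2 ≤ (bb*κ)^2 :=
      pow_le_pow_left₀ (mul_nonneg hl0.le hκ.le) (mul_le_mul_of_nonneg_right hlb hκ.le) 2
    exact mul_le_mul_of_nonneg_right this (sq_nonneg _)
  linarith [stepA, e1, e2, e3, e4, e5, e6, h3, h2', h8', h9, h10]

end AuxLemmas

set_option maxHeartbeats 2000000 in
open Filter in
/-- Theorem `th:cvip`: convergence of the subgradient-extragradient-type algorithm
for the Constrained Variational Inequality Problem. -/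
theorem cvip_algorithm_converges
    {H : Type*} [NormedAddCommGroup H] [InnerProductSpace ℝ H] [CompleteSpace H]
    (C Ω : Set H)
    (hCne : C.Nonempty) (hCcl : IsClosed C) (hCco : Convex ℝ C)
    (hΩne : Ω.Nonempty) (hΩcl : IsClosed Ω) (hΩco : Convex ℝ Ω)
    (f : H → H) (κ : ℝ) (hκ : 0 < κ)
    (hmono : ∀ x ∈ C, ∀ y ∈ C, 0 ≤ ⟪f x - f y, x - y⟫)
    (hLip : ∀ x y : H, ‖f x - f y‖ ≤ κ * ‖x - y‖)
    -- the solution set `SOL(C,f)`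
    (SOL : Set H) (hSOL : SOL = {u : H | u ∈ C ∧ ∀ w ∈ C, 0 ≤ ⟪f u, w - u⟫})
    (hne : (Ω ∩ SOL).Nonempty)
    -- a metric projection operator onto nonempty closed convex subsets of `H`
    (proj : Set H → H → H)
    (hproj : ∀ S : Set H, S.Nonempty → IsClosed S → Convex ℝ S →
      ∀ x : H, proj S x ∈ S ∧ ∀ y ∈ S, ‖x - proj S x‖ ≤ ‖x - y‖)
    -- the parameters
    (lam : ℕ → ℝ) (a b : ℝ) (ha : 0 < a) (hab : a ≤ b) (hb : b < 1 / κ)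
    (hlam : ∀ k, lam k ∈ Set.Icc a b)
    (α : ℕ → ℝ) (c d : ℝ) (hc : 0 < c) (hcd : c ≤ d) (hd : d < 1)
    (hα : ∀ k, α k ∈ Set.Icc c d)
    -- the iterates
    (x y : ℕ → H) (T : ℕ → Set H)
    (hy : ∀ k, y k = proj C (x k - lam k • f (x k)))
    (hT : ∀ k, T k = {w : H | ⟪(x k - lam k • f (x k)) - y k, w - y k⟫ ≤ 0})
    (hx : ∀ k, x (k + 1) =
      α k • x k + (1 - α k) • proj Ω (proj (T k) (x k - lam k • f (y k)))) :
    ∃ z ∈ Ω ∩ SOL,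
      (∀ w : H, Filter.Tendsto (fun k => ⟪x k, w⟫) Filter.atTop (nhds ⟪z, w⟫)) ∧
      (∀ w : H, Filter.Tendsto (fun k => ⟪y k, w⟫) Filter.atTop (nhds ⟪z, w⟫)) ∧
      Filter.Tendsto (fun k => proj (Ω ∩ SOL) (x k)) Filter.atTop (nhds z) := by
  -- Basic consequences of the hypotheses
  have hbκ : b * κ < 1 := (lt_div_iff₀ hκ).mp hb
  have hlam_pos : ∀ k, 0 < lam k := fun k => lt_of_lt_of_le ha (hlam k).1
  have hSOLC : SOL ⊆ C := by rw [hSOL]; exact fun u hu => hu.1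
  have fcont : Continuous f := by
    apply (LipschitzWith.of_dist_le_mul (K := Real.toNNReal κ) ?_).continuous
    intro p q
    rw [dist_eq_norm, dist_eq_norm]
    simpa [Real.coe_toNNReal κ hκ.le] using hLip p q
  -- the iterates `t k` and `zf k`
  set t : ℕ → H := fun k => proj (T k) (x k - lam k • f (y k)) with ht
  set zf : ℕ → H := fun k => proj Ω (t k) with hzfd
  have hx' : ∀ k, x (k + 1) = α k • x k + (1 - α k) • zf k := hx
  -- facts about `y`
  have projC := hproj C hCne hCcl hCco
  have hyC : ∀ k, y k ∈ C := by intro k; rw [hy k]; exact (projC _).1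
  -- `T k` is a nonempty closed convex set containing `C`
  have hTco : ∀ k, Convex ℝ (T k) := by
    intro k
    rw [hT k]
    intro w₁ h₁ w₂ h₂ s r hs hr hsr
    obtain rfl : s = 1 - r := by linarith
    simp only [Set.mem_setOf_eq] at *
    have hid : (1-r) • w₁ + r • w₂ - y k = (1-r) • (w₁ - y k) + r • (w₂ - y k) := by module
    rw [hid, inner_add_right, real_inner_smul_right, real_inner_smul_right]
    nlinarith
  have hTcl : ∀ k, IsClosed (T k) := by
    intro k
    rw [hT k]
    exact isClosed_le (continuous_const.inner (continuous_id.sub continuous_const))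
      continuous_const
  have hTy : ∀ k, y k ∈ T k := by intro k; rw [hT k]; simp
  have hCsubT : ∀ k, C ⊆ T k := by
    intro k w hw
    rw [hT k]
    have h := aux_proj_char hCco (projC (x k - lam k • f (x k))).1
      (projC (x k - lam k • f (x k))).2 hw
    rw [← hy k] at h
    exact h
  have projT := fun k => hproj (T k) ⟨y k, hTy k⟩ (hTcl k) (hTco k)
  have projΩ := hproj Ω hΩne hΩcl hΩco
  have htT : ∀ k, t k ∈ T k := fun k => (projT k _).1
  have hzΩ : ∀ k, zf k ∈ Ω := fun k => (projΩ _).1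
  -- Minty's trick
  have minty : ∀ z' ∈ C, (∀ w ∈ C, 0 ≤ ⟪f w, w - z'⟫) → ∀ w ∈ C, 0 ≤ ⟪f z', w - z'⟫ := by
    intro z' hz' hyp w hw
    set q : ℕ → H := fun n => (1 - (1:ℝ)/(n+1)) • z' + ((1:ℝ)/(n+1)) • w with hq
    have hs0 : ∀ n : ℕ, (0:ℝ) < 1/(n+1) := by intro n; positivity
    have hs1 : ∀ n : ℕ, (1:ℝ)/(n+1) ≤ 1 := by
      intro n; rw [div_le_one (by positivity)]; linarith [Nat.cast_nonneg (α := ℝ) n]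
    have hqC : ∀ n, q n ∈ C := fun n =>
      hCco hz' hw (by linarith [hs0 n, hs1 n]) (hs0 n).le (by ring)
    have hkey : ∀ n, 0 ≤ ⟪f (q n), w - z'⟫ := by
      intro n
      have h1 := hyp (q n) (hqC n)
      have h2 : q n - z' = ((1:ℝ)/(n+1)) • (w - z') := by rw [hq]; module
      rw [h2, real_inner_smul_right] at h1
      nlinarith [hs0 n]
    have hqz : Filter.Tendsto q Filter.atTop (nhds z') := by
      have h1 : Filter.Tendsto (fun n : ℕ => (1:ℝ)/(n+1)) Filter.atTop (nhds 0) :=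
        tendsto_one_div_add_atTop_nhds_zero_nat
      have h2 : Filter.Tendsto (fun n : ℕ => z' + ((1:ℝ)/(n+1)) • (w - z'))
          Filter.atTop (nhds (z' + (0:ℝ) • (w - z'))) :=
        tendsto_const_nhds.add (h1.smul_const (w - z'))
      simp only [zero_smul, add_zero] at h2
      convert h2 using 2 with n
      rw [hq]; module
    have : Filter.Tendsto (fun n => ⟪f (q n), w - z'⟫) Filter.atTop (nhds ⟪f z', w - z'⟫) :=
      ((fcont.tendsto z').comp hqz).inner tendsto_const_nhds
    exact ge_of_tendsto' this hkey
  -- `Ω ∩ SOL` is nonempty closed convex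
  have hSOLcl : IsClosed SOL := by
    rw [hSOL]
    have he : {u : H | u ∈ C ∧ ∀ w ∈ C, 0 ≤ ⟪f u, w - u⟫}
        = C ∩ ⋂ w ∈ C, {u : H | 0 ≤ ⟪f u, w - u⟫} := by
      ext u; simp [Set.mem_iInter]
    rw [he]
    exact hCcl.inter (isClosed_biInter fun w hw =>
      isClosed_le continuous_const (fcont.inner (continuous_const.sub continuous_id)))
  have hSOLco : Convex ℝ SOL := by
    have hchar : SOL = C ∩ ⋂ w ∈ C, {u : H | 0 ≤ ⟪f w, w - u⟫} := by
      ext u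
      simp only [Set.mem_inter_iff, Set.mem_iInter, Set.mem_setOf_eq, hSOL]
      constructor
      · rintro ⟨huC, hsol⟩
        refine ⟨huC, fun w hw => ?_⟩
        have h1 := hmono w hw u huC
        have h2 := hsol w hw
        rw [inner_sub_left] at h1
        linarith
      · rintro ⟨huC, hh⟩
        exact ⟨huC, minty u huC hh⟩
    rw [hchar]
    refine hCco.inter (convex_iInter fun w => convex_iInter fun hw => ?_)
    intro u₁ h₁ u₂ h₂ s r hs hr hsr
    obtain rfl : s = 1 - r := by linarith
    simp only [Set.mem_setOf_eq] at *
    have hid : w - ((1-r) • u₁ + r • u₂) = (1-r) • (w - u₁) + r • (w - u₂) := by module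
    rw [hid, inner_add_right, real_inner_smul_right, real_inner_smul_right]
    nlinarith
  have hScl : IsClosed (Ω ∩ SOL) := hΩcl.inter hSOLcl
  have hSco : Convex ℝ (Ω ∩ SOL) := hΩco.inter hSOLco
  have projS := hproj (Ω ∩ SOL) hne hScl hSco
  -- the key inequality
  have hkey : ∀ u ∈ SOL, ∀ k,
      ‖t k - u‖^2 ≤ ‖x k - u‖^2 - (1-(b*κ)^2) * ‖x k - y k‖^2 := by
    intro u hu k
    have huC : u ∈ C := hSOLC hu
    have h1 : ⟪(x k - lam k • f (y k)) - t k, u - t k⟫ ≤ 0 :=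
      aux_proj_char (hTco k) (htT k) (projT k _).2 (hCsubT k huC)
    have h2 : 0 ≤ ⟪y k - u, f (y k)⟫ := by
      rw [hSOL] at hu
      have hs1 : 0 ≤ ⟪f u, y k - u⟫ := hu.2 (y k) (hyC k)
      have hs2 : 0 ≤ ⟪f (y k) - f u, y k - u⟫ := hmono (y k) (hyC k) u huC
      rw [inner_sub_left] at hs2
      rw [real_inner_comm]
      linarith
    have h3 : ⟪x k - lam k • f (x k) - y k, t k - y k⟫ ≤ 0 := by
      have := htT k
      rw [hT k] at this
      exact this
    exact aux_key (hlam_pos k) (hlam k).2 hκ h1 h2 h3 (hLip (x k) (y k))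
  -- the Fejér-type inequality
  set ε₁ : ℝ := (1-d) * (1-(b*κ)^2) with hε₁
  set ε₂ : ℝ := c * (1-d) with hε₂
  have hγ : 0 ≤ 1-(b*κ)^2 := by
    have : 0 ≤ b * κ := mul_nonneg (le_trans ha.le hab) hκ.le
    nlinarith
  have hε₁pos : 0 < ε₁ := by
    apply mul_pos (by linarith)
    have : 0 ≤ b * κ := mul_nonneg (le_trans ha.le hab) hκ.le
    nlinarith
  have hε₂pos : 0 < ε₂ := mul_pos hc (by linarith)
  have hFej : ∀ u ∈ Ω ∩ SOL, ∀ k,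
      ‖x (k+1) - u‖^2 + ε₁ * ‖x k - y k‖^2 + ε₂ * ‖x k - zf k‖^2 ≤ ‖x k - u‖^2 := by
    intro u hu k
    obtain ⟨huΩ, husol⟩ := hu
    have hα1 : c ≤ α k := (hα k).1
    have hα2 : α k ≤ d := (hα k).2
    have hzB : ‖zf k - u‖^2 ≤ ‖t k - u‖^2 := by
      have h := aux_proj_char hΩco (projΩ (t k)).1 (projΩ (t k)).2 huΩ
      have h2 := aux_proj_contract h
      nlinarith [sq_nonneg ‖t k - zf k‖]
    have hBA : ‖zf k - u‖^2 ≤ ‖x k - u‖^2 - (1-(b*κ)^2)*‖x k - y k‖^2 :=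
      le_trans hzB (hkey u husol k)
    have hcomb : ‖x (k+1) - u‖^2
        = α k * ‖x k - u‖^2 + (1-α k) * ‖zf k - u‖^2
          - α k * (1-α k) * ‖x k - zf k‖^2 := by
      have h0 : x (k+1) - u = α k • (x k - u) + (1 - α k) • (zf k - u) := by
        rw [hx' k]; module
      rw [h0, aux_comb, show (x k - u) - (zf k - u) = x k - zf k by abel]
    have m1 : (1-α k) * ‖zf k - u‖^2
        ≤ (1-α k) * (‖x k - u‖^2 - (1-(b*κ)^2)*‖x k - y k‖^2) :=
      mul_le_mul_of_nonneg_left hBA (by linarith)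
    have m2 : ε₁ * ‖x k - y k‖^2 ≤ ((1-α k)*(1-(b*κ)^2)) * ‖x k - y k‖^2 := by
      apply mul_le_mul_of_nonneg_right _ (sq_nonneg _)
      exact mul_le_mul_of_nonneg_right (by linarith) hγ
    have m3 : ε₂ * ‖x k - zf k‖^2 ≤ (α k * (1-α k)) * ‖x k - zf k‖^2 := by
      apply mul_le_mul_of_nonneg_right _ (sq_nonneg _)
      exact mul_le_mul hα1 (by linarith) (by linarith) (le_trans hc.le hα1)
    linarith [m1, m2, m3, hcomb]
  -- monotonicity and limits of distances
  have hanti : ∀ u ∈ Ω ∩ SOL, Antitone fun k => ‖x k - u‖^2 := by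
    intro u hu
    apply antitone_nat_of_succ_le
    intro k
    have := hFej u hu k
    nlinarith [mul_nonneg hε₁pos.le (sq_nonneg ‖x k - y k‖),
      mul_nonneg hε₂pos.le (sq_nonneg ‖x k - zf k‖)]
  have hlimD : ∀ u ∈ Ω ∩ SOL, ∃ L : ℝ,
      Filter.Tendsto (fun k => ‖x k - u‖^2) Filter.atTop (nhds L) := by
    intro u hu
    refine ⟨_, tendsto_atTop_ciInf (hanti u hu) ⟨0, ?_⟩⟩
    rintro r ⟨k, rfl⟩; positivity
  obtain ⟨u₀, hu₀⟩ := hne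
  obtain ⟨L₀, hL₀⟩ := hlimD u₀ hu₀
  -- vanishing of the residuals
  have hdiff : Filter.Tendsto (fun k => ‖x k - u₀‖^2 - ‖x (k+1) - u₀‖^2)
      Filter.atTop (nhds 0) := by
    have h2 : Filter.Tendsto (fun k => ‖x (k+1) - u₀‖^2) Filter.atTop (nhds L₀) :=
      hL₀.comp (tendsto_add_atTop_nat 1)
    simpa using hL₀.sub h2
  have hP0 : Filter.Tendsto (fun k => ‖x k - y k‖^2) Filter.atTop (nhds 0) := by
    apply squeeze_zero (fun k => sq_nonneg _)
      (g := fun k => (‖x k - u₀‖^2 - ‖x (k+1) - u₀‖^2)/ε₁)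
    · intro k
      rw [le_div_iff₀ hε₁pos]
      nlinarith [hFej u₀ hu₀ k, mul_nonneg hε₂pos.le (sq_nonneg ‖x k - zf k‖)]
    · simpa using hdiff.div_const ε₁
  have hQ0 : Filter.Tendsto (fun k => ‖x k - zf k‖^2) Filter.atTop (nhds 0) := by
    apply squeeze_zero (fun k => sq_nonneg _)
      (g := fun k => (‖x k - u₀‖^2 - ‖x (k+1) - u₀‖^2)/ε₂)
    · intro k
      rw [le_div_iff₀ hε₂pos]
      nlinarith [hFej u₀ hu₀ k, mul_nonneg hε₁pos.le (sq_nonneg ‖x k - y k‖)]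
    · simpa using hdiff.div_const ε₂
  have sqrt_of_sq : ∀ g : ℕ → H, Filter.Tendsto (fun k => ‖g k‖^2) Filter.atTop (nhds 0) →
      Filter.Tendsto (fun k => ‖g k‖) Filter.atTop (nhds 0) := by
    intro g hg
    have h := (Real.continuous_sqrt.tendsto 0).comp hg
    simp only [Function.comp_def, Real.sqrt_zero] at h
    have heq : (fun k => Real.sqrt (‖g k‖^2)) = fun k => ‖g k‖ :=
      funext fun k => Real.sqrt_sq (norm_nonneg _)
    rwa [heq] at h
  have hxyn : Filter.Tendsto (fun k => ‖x k - y k‖) Filter.atTop (nhds 0) :=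
    sqrt_of_sq _ hP0
  have hxzn : Filter.Tendsto (fun k => ‖x k - zf k‖) Filter.atTop (nhds 0) :=
    sqrt_of_sq _ hQ0
  have hxy : Filter.Tendsto (fun k => x k - y k) Filter.atTop (nhds 0) :=
    tendsto_zero_iff_norm_tendsto_zero.2 hxyn
  have hxz : Filter.Tendsto (fun k => x k - zf k) Filter.atTop (nhds 0) :=
    tendsto_zero_iff_norm_tendsto_zero.2 hxzn
  -- boundedness
  set R : ℝ := ‖x 0 - u₀‖ + ‖u₀‖ with hR
  have hdist0 : ∀ k, ‖x k - u₀‖ ≤ ‖x 0 - u₀‖ := by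
    intro k
    have h := hanti u₀ hu₀ (Nat.zero_le k)
    have h2 := Real.sqrt_le_sqrt h
    rwa [Real.sqrt_sq (norm_nonneg _), Real.sqrt_sq (norm_nonneg _)] at h2
  have hbound : ∀ k, ‖x k‖ ≤ R := by
    intro k
    calc ‖x k‖ = ‖(x k - u₀) + u₀‖ := by rw [sub_add_cancel]
    _ ≤ ‖x k - u₀‖ + ‖u₀‖ := norm_add_le _ _
    _ ≤ R := by rw [hR]; linarith [hdist0 k]
  have hxyb : ∀ k, ‖x k - y k‖ ≤ Real.sqrt (‖x 0 - u₀‖^2/ε₁) := by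
    intro k
    have h1 : ε₁*‖x k - y k‖^2 ≤ ‖x k - u₀‖^2 := by
      nlinarith [hFej u₀ hu₀ k, sq_nonneg ‖x (k+1) - u₀‖,
        mul_nonneg hε₂pos.le (sq_nonneg ‖x k - zf k‖)]
    have h2 : ‖x k - y k‖^2 ≤ ‖x 0 - u₀‖^2/ε₁ := by
      rw [le_div_iff₀ hε₁pos]
      have h3 : ‖x k - u₀‖^2 ≤ ‖x 0 - u₀‖^2 :=
        pow_le_pow_left₀ (norm_nonneg _) (hdist0 k) 2
      nlinarith
    calc ‖x k - y k‖ = Real.sqrt (‖x k - y k‖^2) := (Real.sqrt_sq (norm_nonneg _)).symm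
    _ ≤ _ := Real.sqrt_le_sqrt h2
  have hyb : ∀ k, ‖y k‖ ≤ R + Real.sqrt (‖x 0 - u₀‖^2/ε₁) := by
    intro k
    calc ‖y k‖ = ‖x k - (x k - y k)‖ := by rw [sub_sub_cancel]
    _ ≤ ‖x k‖ + ‖x k - y k‖ := norm_sub_le _ _
    _ ≤ R + Real.sqrt (‖x 0 - u₀‖^2/ε₁) := add_le_add (hbound k) (hxyb k)
  -- transfer of weak limits along strongly-vanishing perturbations
  have hwtrans : ∀ (g : ℕ → H), Filter.Tendsto (fun k => x k - g k) Filter.atTop (nhds 0) →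
      ∀ (F : Filter ℕ), F ≤ Filter.atTop →
      ∀ (z' w : H), Filter.Tendsto (fun k => ⟪x k, w⟫) F (nhds ⟪z', w⟫) →
      Filter.Tendsto (fun k => ⟪g k, w⟫) F (nhds ⟪z', w⟫) := by
    intro g hg F hF z' w hx0
    have h1 : Filter.Tendsto (fun k => ⟪g k - x k, w⟫) Filter.atTop (nhds 0) := by
      have h2 : Filter.Tendsto (fun k => ⟪-(x k - g k), w⟫) Filter.atTop
          (nhds ⟪-(0:H), w⟫) := Filter.Tendsto.inner hg.neg tendsto_const_nhds
      simp only [neg_sub, neg_zero, inner_zero_left] at h2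
      exact h2
    have h3 := hx0.add (h1.mono_left hF)
    simp only [add_zero] at h3
    have heq : (fun k => ⟪x k, w⟫ + ⟪g k - x k, w⟫) = fun k => ⟪g k, w⟫ := by
      funext k; rw [← inner_add_left, show x k + (g k - x k) = g k by abel]
    rwa [heq] at h3
  -- weak limits of sequences in closed convex sets belong to the set
  have hwmem : ∀ (D : Set H), D.Nonempty → IsClosed D → Convex ℝ D →
      ∀ (g : ℕ → H), (∀ k, g k ∈ D) → ∀ (U : Ultrafilter ℕ) (z' : H),
      (∀ w, Filter.Tendsto (fun k => ⟪g k, w⟫) (U : Filter ℕ) (nhds ⟪z', w⟫)) → z' ∈ D := by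
    intro D hDne hDcl hDco g hgD U z' hgw
    have hD := hproj D hDne hDcl hDco
    have hobt : ∀ k, ⟪g k, z' - proj D z'⟫ ≤ ⟪proj D z', z' - proj D z'⟫ := by
      intro k
      have h := aux_proj_char hDco (hD z').1 (hD z').2 (hgD k)
      rw [inner_sub_right] at h
      rw [real_inner_comm (g k) (z' - proj D z'),
        real_inner_comm (proj D z') (z' - proj D z')] at h
      linarith
    have hle : ⟪z', z' - proj D z'⟫ ≤ ⟪proj D z', z' - proj D z'⟫ :=
      le_of_tendsto (hgw (z' - proj D z')) (Filter.Eventually.of_forall hobt)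
    have h0 : ⟪z' - proj D z', z' - proj D z'⟫ ≤ 0 := by rw [inner_sub_left]; linarith
    have h1 : z' - proj D z' = 0 :=
      inner_self_eq_zero.mp (le_antisymm h0 real_inner_self_nonneg)
    have h2 : z' = proj D z' := sub_eq_zero.mp h1
    rw [h2]; exact (hD z').1
  -- extraction of weak cluster points lying in `Ω ∩ SOL`
  have getz : ∀ U : Ultrafilter ℕ, (U : Filter ℕ) ≤ Filter.atTop →
      ∃ z', (z' ∈ Ω ∩ SOL) ∧
        ∀ w, Filter.Tendsto (fun k => ⟪x k, w⟫) (U : Filter ℕ) (nhds ⟪z', w⟫) := by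
    intro U hU
    obtain ⟨z', hz'w⟩ := aux_weak_ultra x R hbound U
    have hyU : ∀ w, Filter.Tendsto (fun k => ⟪y k, w⟫) (U : Filter ℕ) (nhds ⟪z', w⟫) :=
      fun w => hwtrans y hxy U hU z' w (hz'w w)
    have hzU : ∀ w, Filter.Tendsto (fun k => ⟪zf k, w⟫) (U : Filter ℕ) (nhds ⟪z', w⟫) :=
      fun w => hwtrans zf hxz U hU z' w (hz'w w)
    have hz'C : z' ∈ C := hwmem C hCne hCcl hCco y hyC U z' hyU
    have hz'Ω : z' ∈ Ω := hwmem Ω hΩne hΩcl hΩco zf hzΩ U z' hzU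
    have hz'ineq : ∀ w ∈ C, 0 ≤ ⟪f w, w - z'⟫ := by
      intro w hw
      obtain ⟨M, hwy, hM0⟩ : ∃ M : ℝ, (∀ k, ‖w - y k‖ ≤ M) ∧ 0 ≤ M := by
        refine ⟨‖w‖ + (R + Real.sqrt (‖x 0 - u₀‖^2/ε₁)), fun k => ?_, ?_⟩
        · calc ‖w - y k‖ ≤ ‖w‖ + ‖y k‖ := norm_sub_le _ _
          _ ≤ _ := by linarith [hyb k]
        · have hR0 : 0 ≤ R := le_trans (norm_nonneg (x 0)) (hbound 0)
          have := Real.sqrt_nonneg (‖x 0 - u₀‖^2/ε₁)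
          positivity
      have hlow : ∀ k, -((κ + 1/a) * M * ‖x k - y k‖) ≤ ⟪f w, w - y k⟫ := by
        intro k
        have A1 : 0 ≤ ⟪f w - f (y k), w - y k⟫ := hmono w hw (y k) (hyC k)
        rw [inner_sub_left] at A1
        have A2 : ⟪x k - lam k • f (x k) - y k, w - y k⟫ ≤ 0 := by
          have h := hCsubT k hw
          rw [hT k] at h
          exact h
        have A2' : ⟪x k - y k, w - y k⟫ - lam k * ⟪f (x k), w - y k⟫ ≤ 0 := by
          have h0 : x k - lam k • f (x k) - y k = (x k - y k) - lam k • f (x k) := by abel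
          rw [h0, inner_sub_left, real_inner_smul_left] at A2
          exact A2
        have A3 : -(‖x k - y k‖ * M) ≤ ⟪x k - y k, w - y k⟫ := by
          have h0 := abs_real_inner_le_norm (x k - y k) (w - y k)
          have h1 : ‖x k - y k‖ * ‖w - y k‖ ≤ ‖x k - y k‖ * M :=
            mul_le_mul_of_nonneg_left (hwy k) (norm_nonneg _)
          have h2 := neg_abs_le ⟪x k - y k, w - y k⟫
          linarith
        have A4 : -(1/a * (‖x k - y k‖ * M)) ≤ ⟪f (x k), w - y k⟫ := by
          have h0 : -(‖x k - y k‖ * M) ≤ lam k * ⟪f (x k), w - y k⟫ := by linarith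
          rcases le_or_gt 0 ⟪f (x k), w - y k⟫ with hsign | hsign
          · have h1 : 0 ≤ 1/a * (‖x k - y k‖ * M) := by
              apply mul_nonneg (by positivity) (mul_nonneg (norm_nonneg _) hM0)
            linarith
          · have h1 : lam k * ⟪f (x k), w - y k⟫ ≤ a * ⟪f (x k), w - y k⟫ := by
              nlinarith [(hlam k).1]
            have h2 : -(‖x k - y k‖ * M) ≤ a * ⟪f (x k), w - y k⟫ := le_trans h0 h1
            have h3 : (-(‖x k - y k‖ * M))/a ≤ ⟪f (x k), w - y k⟫ := by
              rw [div_le_iff₀ ha]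
              linarith [h2]
            calc -(1/a * (‖x k - y k‖ * M)) = (-(‖x k - y k‖ * M))/a := by ring
            _ ≤ _ := h3
        have A5 : -(κ * (‖x k - y k‖ * M)) ≤ ⟪f (y k) - f (x k), w - y k⟫ := by
          have h0 := abs_real_inner_le_norm (f (y k) - f (x k)) (w - y k)
          have h1 : ‖f (y k) - f (x k)‖ ≤ κ * ‖x k - y k‖ := by
            have := hLip (y k) (x k)
            rwa [norm_sub_rev (y k) (x k)] at this
          have h2 : ‖f (y k) - f (x k)‖ * ‖w - y k‖ ≤ (κ*‖x k - y k‖) * M :=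
            mul_le_mul h1 (hwy k) (norm_nonneg _) (by positivity)
          have h3 := neg_abs_le ⟪f (y k) - f (x k), w - y k⟫
          nlinarith
        have A6 : ⟪f (y k), w - y k⟫
            = ⟪f (y k) - f (x k), w - y k⟫ + ⟪f (x k), w - y k⟫ := by
          rw [← inner_add_left, sub_add_cancel]
        linarith [A1, A4, A5, A6]
      have hlim1 : Filter.Tendsto (fun k => -((κ + 1/a) * M * ‖x k - y k‖))
          Filter.atTop (nhds 0) := by
        have h := hxyn.const_mul ((κ + 1/a) * M)
        simpa using h.neg
      have hlim2 : Filter.Tendsto (fun k => ⟪f w, w - y k⟫) (U : Filter ℕ)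
          (nhds ⟪f w, w - z'⟫) := by
        have h1 := hyU (f w)
        have h2 := (tendsto_const_nhds (x := ⟪f w, w⟫) (f := (U : Filter ℕ))).sub h1
        have heq : (fun k => ⟪f w, w⟫ - ⟪y k, f w⟫) = fun k => ⟪f w, w - y k⟫ :=
          funext fun k => by rw [inner_sub_right, real_inner_comm (y k) (f w)]
        have heq2 : ⟪f w, w⟫ - ⟪z', f w⟫ = ⟪f w, w - z'⟫ := by
          rw [inner_sub_right, real_inner_comm z' (f w)]
        rw [heq, heq2] at h2
        exact h2
      exact le_of_tendsto_of_tendsto' (hlim1.mono_left hU) hlim2 hlow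
    exact ⟨z', ⟨hz'Ω, by rw [hSOL]; exact ⟨hz'C, minty z' hz'C hz'ineq⟩⟩, hz'w⟩
  -- Opial's uniqueness argument
  have huniq : ∀ z₁ z₂, z₁ ∈ Ω ∩ SOL → z₂ ∈ Ω ∩ SOL →
      ∀ (U₁ U₂ : Ultrafilter ℕ), (U₁ : Filter ℕ) ≤ Filter.atTop →
      (U₂ : Filter ℕ) ≤ Filter.atTop →
      (∀ w, Filter.Tendsto (fun k => ⟪x k, w⟫) (U₁ : Filter ℕ) (nhds ⟪z₁, w⟫)) →
      (∀ w, Filter.Tendsto (fun k => ⟪x k, w⟫) (U₂ : Filter ℕ) (nhds ⟪z₂, w⟫)) →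
      z₁ = z₂ := by
    intro z₁ z₂ h₁ h₂ U₁ U₂ hU₁ hU₂ hw₁ hw₂
    obtain ⟨L₁, hL₁⟩ := hlimD z₁ h₁
    obtain ⟨L₂, hL₂⟩ := hlimD z₂ h₂
    have hg : Filter.Tendsto (fun k => ⟪x k, z₂ - z₁⟫) Filter.atTop
        (nhds (((L₁ - L₂) - ‖z₁‖^2 + ‖z₂‖^2)/2)) := by
      have hid : ∀ k, ⟪x k, z₂ - z₁⟫
          = ((‖x k - z₁‖^2 - ‖x k - z₂‖^2) - ‖z₁‖^2 + ‖z₂‖^2)/2 := by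
        intro k
        rw [inner_sub_right, norm_sub_sq_real, norm_sub_sq_real]
        ring
      have h := (((hL₁.sub hL₂).sub_const (‖z₁‖^2)).add_const (‖z₂‖^2)).div_const 2
      exact h.congr fun k => (hid k).symm
    have he₁ : ⟪z₁, z₂ - z₁⟫ = ((L₁ - L₂) - ‖z₁‖^2 + ‖z₂‖^2)/2 :=
      tendsto_nhds_unique (hw₁ (z₂ - z₁)) (hg.mono_left hU₁)
    have he₂ : ⟪z₂, z₂ - z₁⟫ = ((L₁ - L₂) - ‖z₁‖^2 + ‖z₂‖^2)/2 :=
      tendsto_nhds_unique (hw₂ (z₂ - z₁)) (hg.mono_left hU₂)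
    have h0 : ⟪z₂ - z₁, z₂ - z₁⟫ = 0 := by rw [inner_sub_left]; linarith
    have h1 : z₂ - z₁ = 0 := inner_self_eq_zero.mp h0
    have := sub_eq_zero.mp h1
    exact this.symm
  -- the weak limit
  set U₀ : Ultrafilter ℕ := Ultrafilter.of Filter.atTop with hU₀
  have hU₀le : (U₀ : Filter ℕ) ≤ Filter.atTop := Ultrafilter.of_le _
  obtain ⟨z, hzS, hzw⟩ := getz U₀ hU₀le
  have hxweak : ∀ w, Filter.Tendsto (fun k => ⟪x k, w⟫) Filter.atTop (nhds ⟪z, w⟫) := by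
    intro w
    rw [Filter.tendsto_iff_ultrafilter]
    intro U hU
    obtain ⟨z', hz'S, hz'w⟩ := getz U hU
    have hzz : z = z' := huniq z z' hzS hz'S U₀ U hU₀le hU hzw hz'w
    rw [hzz]; exact hz'w w
  have hyweak : ∀ w, Filter.Tendsto (fun k => ⟪y k, w⟫) Filter.atTop (nhds ⟪z, w⟫) :=
    fun w => hwtrans y hxy Filter.atTop le_rfl z w (hxweak w)
  -- strong convergence of the projections
  set pp : ℕ → H := fun k => proj (Ω ∩ SOL) (x k) with hpp
  have hppS : ∀ k, pp k ∈ Ω ∩ SOL := fun k => (projS _).1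
  set e : ℕ → ℝ := fun k => ‖x k - pp k‖^2 with hed
  have he_nonneg : ∀ k, 0 ≤ e k := fun k => sq_nonneg _
  have he_anti : Antitone e := by
    intro k m hkm
    have h1 : ‖x m - pp m‖ ≤ ‖x m - pp k‖ := (projS (x m)).2 (pp k) (hppS k)
    have h2 : ‖x m - pp k‖^2 ≤ ‖x k - pp k‖^2 := hanti (pp k) (hppS k) hkm
    have h3 : ‖x m - pp m‖^2 ≤ ‖x m - pp k‖^2 := pow_le_pow_left₀ (norm_nonneg _) h1 2
    exact le_trans h3 h2
  have he_bdd : BddBelow (Set.range e) := ⟨0, by rintro r ⟨k, rfl⟩; exact he_nonneg k⟩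
  have he_lim : Filter.Tendsto e Filter.atTop (nhds (⨅ i, e i)) :=
    tendsto_atTop_ciInf he_anti he_bdd
  set δ : ℝ := ⨅ i, e i with hδ
  have hδ_le : ∀ m, δ ≤ e m := fun m => ciInf_le he_bdd m
  have hcore : ∀ k m, k ≤ m → ‖pp m - pp k‖^2 ≤ 2*(e k) - 2*(e m) := by
    intro k m hkm
    have hqS : (1/2:ℝ) • pp k + (1/2:ℝ) • pp m ∈ Ω ∩ SOL :=
      hSco (hppS k) (hppS m) (by norm_num) (by norm_num) (by norm_num)
    have hq1 : ‖x m - pp m‖ ≤ ‖x m - ((1/2:ℝ) • pp k + (1/2:ℝ) • pp m)‖ :=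
      (projS (x m)).2 _ hqS
    have hq2 : x m - ((1/2:ℝ) • pp k + (1/2:ℝ) • pp m)
        = (1/2:ℝ) • ((x m - pp k) + (x m - pp m)) := by module
    have hq3 : e m ≤ (1/4) * ‖(x m - pp k) + (x m - pp m)‖^2 := by
      have h := pow_le_pow_left₀ (norm_nonneg _) hq1 2
      rw [hq2, norm_smul, Real.norm_eq_abs, mul_pow, sq_abs] at h
      calc e m = ‖x m - pp m‖^2 := rfl
      _ ≤ (1/2)^2 * ‖(x m - pp k) + (x m - pp m)‖^2 := h
      _ = (1/4) * ‖(x m - pp k) + (x m - pp m)‖^2 := by ring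
    have hpar := aux_par (x m - pp k) (x m - pp m)
    have hAk : ‖x m - pp k‖^2 ≤ e k := hanti (pp k) (hppS k) hkm
    have hAB : (x m - pp k) - (x m - pp m) = pp m - pp k := by abel
    have hBe : ‖x m - pp m‖^2 = e m := rfl
    rw [← hAB]
    nlinarith [hq3, hpar, hAk]
  have hcauchy : CauchySeq pp := by
    apply cauchySeq_of_le_tendsto_0 (fun N => Real.sqrt (2*(e N) - 2*δ))
    · intro n m N hn hm
      have key : ∀ i j, N ≤ i → i ≤ j → dist (pp j) (pp i) ≤ Real.sqrt (2*(e N) - 2*δ) := by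
        intro i j hNi hij
        have h1 : ‖pp j - pp i‖^2 ≤ 2*(e i) - 2*(e j) := hcore i j hij
        have h2 : 2*(e i) - 2*(e j) ≤ 2*(e N) - 2*δ := by
          have := he_anti hNi
          have := hδ_le j
          linarith
        rw [dist_eq_norm]
        calc ‖pp j - pp i‖ = Real.sqrt (‖pp j - pp i‖^2) :=
              (Real.sqrt_sq (norm_nonneg _)).symm
        _ ≤ Real.sqrt (2*(e N) - 2*δ) := Real.sqrt_le_sqrt (by linarith)
      rcases le_total n m with h | h
      · rw [dist_comm]; exact key n m hn h
      · exact key m n hm h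
    · have h1 : Filter.Tendsto (fun N => 2*(e N) - 2*δ) Filter.atTop (nhds 0) := by
        have := (he_lim.const_mul 2).sub_const (2*δ)
        simpa [hδ] using this
      have h2 := (Real.continuous_sqrt.tendsto 0).comp h1
      simpa [Function.comp_def, Real.sqrt_zero] using h2
  obtain ⟨pl, hpl⟩ := cauchySeq_tendsto_of_complete hcauchy
  have hplS : pl ∈ Ω ∩ SOL :=
    hScl.mem_of_tendsto hpl (Filter.Eventually.of_forall hppS)
  -- identification of the limit of projections with `z`
  have hzpl : z = pl := by
    have hobt : ∀ k, ⟪x k, z⟫ - ⟪x k, pp k⟫ - ⟪pp k, z⟫ + ⟪pp k, pp k⟫ ≤ 0 := by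
      intro k
      have h := aux_proj_char hSco (projS (x k)).1 (projS (x k)).2 hzS
      rw [inner_sub_left, inner_sub_right, inner_sub_right] at h
      linarith
    have hpn : Filter.Tendsto (fun k => ‖pp k - pl‖) Filter.atTop (nhds 0) :=
      tendsto_iff_norm_sub_tendsto_zero.mp hpl
    have ht1 : Filter.Tendsto (fun k => ⟪x k, pp k - pl⟫) Filter.atTop (nhds 0) := by
      refine squeeze_zero_norm (fun k => ?_) (by simpa using hpn.const_mul R)
      calc ‖⟪x k, pp k - pl⟫‖ ≤ ‖x k‖ * ‖pp k - pl‖ := norm_inner_le_norm _ _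
      _ ≤ R * ‖pp k - pl‖ := mul_le_mul_of_nonneg_right (hbound k) (norm_nonneg _)
    have ht2 : Filter.Tendsto (fun k => ⟪x k, pp k⟫) Filter.atTop (nhds ⟪z, pl⟫) := by
      have h1 := ht1.add (hxweak pl)
      simp only [zero_add] at h1
      have heq : (fun k => ⟪x k, pp k - pl⟫ + ⟪x k, pl⟫) = fun k => ⟪x k, pp k⟫ := by
        funext k; rw [← inner_add_right, sub_add_cancel]
      rwa [heq] at h1
    have ht3 : Filter.Tendsto (fun k => ⟪pp k, z⟫) Filter.atTop (nhds ⟪pl, z⟫) :=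
      Filter.Tendsto.inner hpl tendsto_const_nhds
    have ht4 : Filter.Tendsto (fun k => ⟪pp k, pp k⟫) Filter.atTop (nhds ⟪pl, pl⟫) :=
      Filter.Tendsto.inner hpl hpl
    have htot : Filter.Tendsto
        (fun k => ⟪x k, z⟫ - ⟪x k, pp k⟫ - ⟪pp k, z⟫ + ⟪pp k, pp k⟫)
        Filter.atTop (nhds (⟪z, z⟫ - ⟪z, pl⟫ - ⟪pl, z⟫ + ⟪pl, pl⟫)) :=
      (((hxweak z).sub ht2).sub ht3).add ht4
    have hfin : ⟪z, z⟫ - ⟪z, pl⟫ - ⟪pl, z⟫ + ⟪pl, pl⟫ ≤ 0 :=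
      le_of_tendsto htot (Filter.Eventually.of_forall hobt)
    have h0 : ⟪z - pl, z - pl⟫ ≤ 0 := by
      rw [inner_sub_left, inner_sub_right, inner_sub_right]
      linarith
    have h1 : z - pl = 0 :=
      inner_self_eq_zero.mp (le_antisymm h0 real_inner_self_nonneg)
    exact sub_eq_zero.mp h1
  have hprojlim : Filter.Tendsto (fun k => proj (Ω ∩ SOL) (x k)) Filter.atTop (nhds z) := by
    rw [hzpl]
    exact hpl
  exact ⟨z, hzS, hxweak, hyweak, hprojlim⟩
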